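/- If ρ < σ₁/σ₂, then P(λ₂^{opt}(n) > 0) → 1 as n → ∞. -/

import Mathlib

open MeasureTheory ProbabilityTheory Filter
open scoped Topology ENNReal

/-- Leave-one-out mean from the first `n` observations, deleting the `j`-th one. -/
noncomputable def looM {Ω : Type*} (Y : ℕ → Ω → ℝ) (n j : ℕ) (ω : Ω) : ℝ :=
  (1 / ((n : ℝ) - 1)) * ∑ k ∈ (Finset.range n).erase j, Y k ω

/-- `S₁ᵉ = (1/n) ∑ⱼ (X̄₁^{(−j)} − X̄₂^{(−j)})²`. -/
noncomputable def S1e {Ω : Type*} (Y1 Y2 : ℕ → Ω → ℝ) (n : ℕ) (ω : Ω) : ℝ :=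
  (1 / (n : ℝ)) * ∑ j ∈ Finset.range n, (looM Y1 n j ω - looM Y2 n j ω) ^ 2

/-- `S₂ᵉ = (1/n) ∑ⱼ (X̄₁^{(−j)} − X̄₂^{(−j)})(X̄₁^{(−j)} − X_{1j})`. -/
noncomputable def S2e {Ω : Type*} (Y1 Y2 : ℕ → Ω → ℝ) (n : ℕ) (ω : Ω) : ℝ :=
  (1 / (n : ℝ)) * ∑ j ∈ Finset.range n,
    (looM Y1 n j ω - looM Y2 n j ω) * (looM Y1 n j ω - Y1 j ω)

/-- The cross-validated weight `λ₂^{opt}(n) = S₂ᵉ/S₁ᵉ` (junk value when `S₁ᵉ = 0`). -/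
noncomputable def lam2opt {Ω : Type*} (Y1 Y2 : ℕ → Ω → ℝ) (n : ℕ) (ω : Ω) : ℝ :=
  S2e Y1 Y2 n ω / S1e Y1 Y2 n ω

lemma S2e_eq {Ω : Type*} (Y1 Y2 : ℕ → Ω → ℝ) (ω : Ω) {n : ℕ} (hn : 2 ≤ n) :
    S2e Y1 Y2 n ω = ((n : ℝ) / ((n : ℝ) - 1) ^ 2) *
      ((n : ℝ)⁻¹ * ∑ j ∈ Finset.range n, Y1 j ω ^ 2
        - (n : ℝ)⁻¹ * ∑ j ∈ Finset.range n, Y1 j ω * Y2 j ω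
        - ((n : ℝ)⁻¹ * ∑ j ∈ Finset.range n, Y1 j ω) * ((n : ℝ)⁻¹ * ∑ j ∈ Finset.range n, Y1 j ω)
        + ((n : ℝ)⁻¹ * ∑ j ∈ Finset.range n, Y1 j ω) *
            ((n : ℝ)⁻¹ * ∑ j ∈ Finset.range n, Y2 j ω)) := by
  have h2n : (2 : ℝ) ≤ (n : ℝ) := by exact_mod_cast hn
  have hn0 : (n : ℝ) ≠ 0 := by linarith
  have hn1 : (n : ℝ) - 1 ≠ 0 := by linarith
  set a : ℕ → ℝ := fun j => Y1 j ω with ha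
  set b : ℕ → ℝ := fun j => Y2 j ω with hb
  set c : ℝ := 1 / ((n : ℝ) - 1) with hc
  have hloo : ∀ (Y : ℕ → Ω → ℝ), ∀ j ∈ Finset.range n,
      looM Y n j ω = c * ((∑ k ∈ Finset.range n, Y k ω) - Y j ω) := by
    intro Y j hj
    rw [looM, Finset.sum_erase_eq_sub hj, hc]
  have expand : S2e Y1 Y2 n ω = (1 / (n : ℝ)) * ∑ j ∈ Finset.range n,
      ((c * ((∑ k ∈ Finset.range n, a k) - a j) - c * ((∑ k ∈ Finset.range n, b k) - b j)) *
        (c * ((∑ k ∈ Finset.range n, a k) - a j) - a j)) := by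
    rw [S2e]
    congr 1
    refine Finset.sum_congr rfl fun j hj => ?_
    rw [hloo Y1 j hj, hloo Y2 j hj]
  set SA := ∑ k ∈ Finset.range n, a k with hSA
  set SB := ∑ k ∈ Finset.range n, b k with hSB
  set SAA := ∑ k ∈ Finset.range n, a k ^ 2 with hSAA
  set SAB := ∑ k ∈ Finset.range n, a k * b k with hSAB
  have key : ∑ j ∈ Finset.range n,
      ((c * (SA - a j) - c * (SB - b j)) * (c * (SA - a j) - a j))
      = (n : ℝ) * (c ^ 2 * (SA - SB) * SA)
        + (-(c * (SA - SB) * (c + 1)) - c ^ 2 * SA) * SA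
        + (c ^ 2 * SA) * SB + (c * (c + 1)) * SAA + (-(c * (c + 1))) * SAB := by
    calc ∑ j ∈ Finset.range n,
        ((c * (SA - a j) - c * (SB - b j)) * (c * (SA - a j) - a j))
        = ∑ j ∈ Finset.range n, (c ^ 2 * (SA - SB) * SA
            + (-(c * (SA - SB) * (c + 1)) - c ^ 2 * SA) * a j
            + (c ^ 2 * SA) * b j + (c * (c + 1)) * (a j ^ 2)
            + (-(c * (c + 1))) * (a j * b j)) :=
          Finset.sum_congr rfl fun j _ => by ring
      _ = _ := by
          simp only [Finset.sum_add_distrib, ← Finset.mul_sum, Finset.sum_const,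
            Finset.card_range, nsmul_eq_mul, ← hSA, ← hSB, ← hSAA, ← hSAB]
          ring
  rw [expand, key, hc]
  field_simp
  ring

lemma S1e_pos_of_S2e_ne {Ω : Type*} (Y1 Y2 : ℕ → Ω → ℝ) (ω : Ω) {n : ℕ} (hn : 0 < n)
    (h : S2e Y1 Y2 n ω ≠ 0) : 0 < S1e Y1 Y2 n ω := by
  have hn0 : (0 : ℝ) < (n : ℝ) := by exact_mod_cast hn
  have hnonneg : 0 ≤ S1e Y1 Y2 n ω := by
    rw [S1e]
    exact mul_nonneg (by positivity) (Finset.sum_nonneg fun j _ => sq_nonneg _)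
  rcases hnonneg.lt_or_eq with h1 | h1
  · exact h1
  · exfalso
    apply h
    have h1' : (1 / (n : ℝ)) * ∑ j ∈ Finset.range n,
        (looM Y1 n j ω - looM Y2 n j ω) ^ 2 = 0 := by rw [← S1e]; exact h1.symm
    have hfrac : (1 / (n : ℝ)) ≠ 0 := by positivity
    have hsum : ∑ j ∈ Finset.range n, (looM Y1 n j ω - looM Y2 n j ω) ^ 2 = 0 :=
      (mul_eq_zero.mp h1').resolve_left hfrac
    have hz : ∀ j ∈ Finset.range n, looM Y1 n j ω - looM Y2 n j ω = 0 := by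
      intro j hj
      have := (Finset.sum_eq_zero_iff_of_nonneg (fun i _ => sq_nonneg _)).1 hsum j hj
      exact pow_eq_zero_iff two_ne_zero |>.1 this
    rw [S2e, Finset.sum_eq_zero, mul_zero]
    intro j hj
    rw [hz j hj, zero_mul]

lemma lam2opt_pos_aux {Ω : Type*} (Y1 Y2 : ℕ → Ω → ℝ) (ω : Ω) {n : ℕ} (hn : 2 ≤ n)
    (hR : 0 < (n : ℝ)⁻¹ * ∑ j ∈ Finset.range n, Y1 j ω ^ 2
        - (n : ℝ)⁻¹ * ∑ j ∈ Finset.range n, Y1 j ω * Y2 j ω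
        - ((n : ℝ)⁻¹ * ∑ j ∈ Finset.range n, Y1 j ω) * ((n : ℝ)⁻¹ * ∑ j ∈ Finset.range n, Y1 j ω)
        + ((n : ℝ)⁻¹ * ∑ j ∈ Finset.range n, Y1 j ω) *
            ((n : ℝ)⁻¹ * ∑ j ∈ Finset.range n, Y2 j ω)) :
    0 < lam2opt Y1 Y2 n ω := by
  have h2n : (2 : ℝ) ≤ (n : ℝ) := by exact_mod_cast hn
  have h2 : 0 < S2e Y1 Y2 n ω := by
    rw [S2e_eq Y1 Y2 ω hn]
    exact mul_pos (div_pos (by linarith) (by nlinarith)) hR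
  have h1 : 0 < S1e Y1 Y2 n ω := S1e_pos_of_S2e_ne Y1 Y2 ω (by omega) h2.ne'
  exact div_pos h2 h1

lemma measurable_lam2opt {Ω : Type*} [MeasurableSpace Ω] (Y1 Y2 : ℕ → Ω → ℝ)
    (h1 : ∀ j, Measurable (Y1 j)) (h2 : ∀ j, Measurable (Y2 j)) (n : ℕ) :
    Measurable (lam2opt Y1 Y2 n) := by
  have hloo : ∀ (Y : ℕ → Ω → ℝ), (∀ j, Measurable (Y j)) → ∀ j,
      Measurable (fun ω => looM Y n j ω) := by
    intro Y hY j
    exact (Finset.measurable_sum _ fun k _ => hY k).const_mul _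
  have hs2 : Measurable (S2e Y1 Y2 n) :=
    (Finset.measurable_sum _ fun j _ =>
      ((hloo Y1 h1 j).sub (hloo Y2 h2 j)).mul ((hloo Y1 h1 j).sub (h1 j))).const_mul _
  have hs1 : Measurable (S1e Y1 Y2 n) :=
    (Finset.measurable_sum _ fun j _ =>
      ((hloo Y1 h1 j).sub (hloo Y2 h2 j)).pow_const 2).const_mul _
  exact hs2.div hs1

/-- If `ρ < σ₁/σ₂`, then `P(λ₂^{opt}(n) > 0) → 1` as `n → ∞`. -/
theorem stmt_8 {Ω : Type*} [MeasurableSpace Ω] (μ : Measure Ω) [IsProbabilityMeasure μ]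
    (X : ℕ → Ω → ℝ × ℝ) (hmeas : ∀ j, Measurable (X j))
    (hindep : iIndepFun X μ)
    (hident : ∀ j, IdentDistrib (X j) (X 0) μ μ)
    (hL2a : MemLp (fun ω => (X 0 ω).1) 2 μ)
    (hL2b : MemLp (fun ω => (X 0 ω).2) 2 μ)
    (θ1 θ2 σ1 σ2 ρ : ℝ)
    (hθ1 : θ1 = ∫ ω, (X 0 ω).1 ∂μ) (hθ2 : θ2 = ∫ ω, (X 0 ω).2 ∂μ)
    (hσ1 : σ1 ^ 2 = variance (fun ω => (X 0 ω).1) μ)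
    (hσ2 : σ2 ^ 2 = variance (fun ω => (X 0 ω).2) μ)
    (hσ1pos : 0 < σ1) (hσ2pos : 0 < σ2)
    (hρ : ρ * (σ1 * σ2) = ∫ ω, ((X 0 ω).1 - θ1) * ((X 0 ω).2 - θ2) ∂μ)
    (hcond : ρ < σ1 / σ2) :
    Tendsto
      (fun n => μ {ω | 0 < lam2opt (fun j ω => (X j ω).1) (fun j ω => (X j ω).2) n ω})
      atTop (nhds 1) := by
  -- integrability facts
  have intA : Integrable (fun ω => (X 0 ω).1) μ := hL2a.integrable one_le_two
  have intB : Integrable (fun ω => (X 0 ω).2) μ := hL2b.integrable one_le_two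
  have intA2 : Integrable (fun ω => (X 0 ω).1 ^ 2) μ := hL2a.integrable_sq
  have intB2 : Integrable (fun ω => (X 0 ω).2 ^ 2) μ := hL2b.integrable_sq
  have intAB : Integrable (fun ω => (X 0 ω).1 * (X 0 ω).2) μ := by
    have hsum : MemLp (fun ω => (X 0 ω).1 + (X 0 ω).2) 2 μ := hL2a.add hL2b
    have h := ((hsum.integrable_sq.sub intA2).sub intB2).const_mul (1 / 2 : ℝ)
    exact h.congr (Filter.Eventually.of_forall fun ω => by simp; ring)
  -- moments
  have hm2 : ∫ ω, (X 0 ω).1 ^ 2 ∂μ = σ1 ^ 2 + θ1 ^ 2 := by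
    have h := variance_eq_sub (μ := μ) hL2a
    have h2 : σ1 ^ 2 = (∫ ω, (X 0 ω).1 ^ 2 ∂μ) - θ1 ^ 2 := by
      rw [hσ1, h, hθ1]; rfl
    linarith
  have hm12 : ∫ ω, (X 0 ω).1 * (X 0 ω).2 ∂μ = ρ * (σ1 * σ2) + θ1 * θ2 := by
    have hexp : (fun ω => ((X 0 ω).1 - θ1) * ((X 0 ω).2 - θ2)) =
        fun ω => ((X 0 ω).1 * (X 0 ω).2 - θ1 * (X 0 ω).2 - θ2 * (X 0 ω).1) + θ1 * θ2 :=
      funext fun ω => by ring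
    rw [hexp] at hρ
    have i1 : Integrable (fun ω => (X 0 ω).1 * (X 0 ω).2 - θ1 * (X 0 ω).2) μ :=
      intAB.sub (intB.const_mul θ1)
    have i2 : Integrable
        (fun ω => (X 0 ω).1 * (X 0 ω).2 - θ1 * (X 0 ω).2 - θ2 * (X 0 ω).1) μ :=
      i1.sub (intA.const_mul θ2)
    rw [integral_add i2 (integrable_const _), integral_sub i1 (intA.const_mul θ2),
      integral_sub intAB (intB.const_mul θ1), integral_const_mul, integral_const_mul,
      integral_const, probReal_univ, one_smul,
      ← hθ1, ← hθ2] at hρ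
    linarith
  -- positivity of the limit
  have hρσ : ρ * σ2 < σ1 := (lt_div_iff₀ hσ2pos).1 hcond
  have hLpos : 0 < σ1 ^ 2 - ρ * (σ1 * σ2) := by nlinarith
  -- strong law of large numbers for composed variables
  have slln : ∀ (g : ℝ × ℝ → ℝ), Measurable g → Integrable (fun ω => g (X 0 ω)) μ →
      ∀ᵐ ω ∂μ, Tendsto (fun n : ℕ => (n : ℝ)⁻¹ * ∑ i ∈ Finset.range n, g (X i ω)) atTop
        (𝓝 (∫ ω, g (X 0 ω) ∂μ)) := by
    intro g hg hint
    have h := strong_law_ae (μ := μ) (fun i ω => g (X i ω)) hint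
      (fun i j hij => (hindep.indepFun hij).comp hg hg)
      (fun i => (hident i).comp hg)
    simpa [smul_eq_mul] using h
  have sl1 := slln (fun p => p.1) measurable_fst intA
  have sl2 := slln (fun p => p.2) measurable_snd intB
  have sl3 := slln (fun p => p.1 ^ 2) (measurable_fst.pow_const 2) intA2
  have sl4 := slln (fun p => p.1 * p.2) (measurable_fst.mul measurable_snd) intAB
  -- a.e. eventually lam2opt > 0
  have hae : ∀ᵐ ω ∂μ, ∀ᶠ n in atTop,
      ω ∈ {ω | 0 < lam2opt (fun j ω => (X j ω).1) (fun j ω => (X j ω).2) n ω} := by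
    filter_upwards [sl1, sl2, sl3, sl4] with ω h1 h2 h3 h4
    have hT := ((h3.sub h4).sub (h1.mul h1)).add (h1.mul h2)
    have hx : (∫ ω, (X 0 ω).1 ^ 2 ∂μ) - (∫ ω, (X 0 ω).1 * (X 0 ω).2 ∂μ)
        - (∫ ω, (X 0 ω).1 ∂μ) * (∫ ω, (X 0 ω).1 ∂μ)
        + (∫ ω, (X 0 ω).1 ∂μ) * (∫ ω, (X 0 ω).2 ∂μ) = σ1 ^ 2 - ρ * (σ1 * σ2) := by
      rw [hm2, hm12, ← hθ1, ← hθ2]; ring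
    rw [hx] at hT
    have hev := (tendsto_order.1 hT).1 0 hLpos
    filter_upwards [hev, eventually_ge_atTop 2] with n hn1 hn2
    exact lam2opt_pos_aux _ _ ω hn2 hn1
  -- measurability
  set s : ℕ → Set Ω :=
    fun n => {ω | 0 < lam2opt (fun j ω => (X j ω).1) (fun j ω => (X j ω).2) n ω} with hs
  have hsm : ∀ n, MeasurableSet (s n) := fun n =>
    measurableSet_lt measurable_const
      (measurable_lam2opt _ _ (fun j => measurable_fst.comp (hmeas j))
        (fun j => measurable_snd.comp (hmeas j)) n)
  -- the tail union of the complements tends to a null set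
  set v : ℕ → Set Ω := fun m => ⋃ k ∈ Set.Ici m, (s k)ᶜ with hv
  have hv_anti : Antitone v := fun m m' h =>
    Set.biUnion_subset_biUnion_left (Set.Ici_subset_Ici.2 h)
  have hv_meas : ∀ m, MeasurableSet (v m) := fun m =>
    MeasurableSet.biUnion (Set.to_countable _) fun k _ => (hsm k).compl
  have hInter : μ (⋂ m, v m) = 0 := by
    refine measure_eq_zero_iff_ae_notMem.2 ?_
    filter_upwards [hae] with ω hω
    rw [Filter.eventually_atTop] at hω
    obtain ⟨N, hN⟩ := hω
    intro hmem
    obtain ⟨k, hk, hkc⟩ := Set.mem_iUnion₂.1 (Set.mem_iInter.1 hmem N)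
    exact hkc (hN k hk)
  have hTv : Tendsto (fun m => μ (v m)) atTop (𝓝 0) := by
    have h := tendsto_measure_iInter_atTop (μ := μ)
      (fun m => (hv_meas m).nullMeasurableSet) hv_anti ⟨0, measure_ne_top μ _⟩
    rw [hInter] at h
    exact h
  have hcompl : Tendsto (fun n => μ (s n)ᶜ) atTop (𝓝 0) := by
    refine tendsto_of_tendsto_of_tendsto_of_le_of_le tendsto_const_nhds hTv
      (fun n => zero_le) (fun n => measure_mono ?_)
    intro ω hω
    exact Set.mem_biUnion Set.self_mem_Ici hω
  have hfinal : Tendsto (fun n => 1 - μ (s n)ᶜ) atTop (𝓝 ((1 : ENNReal) - 0)) :=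
    ((ENNReal.continuous_sub_left ENNReal.one_ne_top).continuousAt).tendsto.comp hcompl
  have heq : ∀ n, 1 - μ (s n)ᶜ = μ (s n) := by
    intro n
    rw [prob_compl_eq_one_sub (hsm n)]
    exact ENNReal.sub_sub_cancel ENNReal.one_ne_top prob_le_one
  simp only [tsub_zero] at hfinal
  exact hfinal.congr heq
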